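/- Let f ∈ C₀(D) be a continuous real-valued function on the Λ-duplicate D vanishing at infinity, let δ > 0, and let (s,i) ∈ D. Then there are only finitely many (t,j) ∈ (s,i)⁺ satisfying |f(t,j)| ≥ δ. -/

import Mathlib

/-- An element of Kurepa's tree `Λ`: an injective function `t : α → ω` with countable
ordinal domain `α` and coinfinite range.  The function is represented as a total function
on ordinals which takes the junk value `0` outside of the domain. -/
structure Lambda : Type 1 where
  toFun : Ordinal.{0} → ℕ
  dom : Ordinal.{0}
  countable : dom.card ≤ Cardinal.aleph0
  inj : ∀ β γ, β < dom → γ < dom → toFun β = toFun γ → β = γ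
  coinfinite : {n : ℕ | ∀ β, β < dom → toFun β ≠ n}.Infinite
  junk : ∀ β, ¬ β < dom → toFun β = 0

/-- The tree order on `Λ`: `s ≼ t` iff `t` extends `s`. -/
def Lambda.le (s t : Lambda) : Prop :=
  s.dom ≤ t.dom ∧ ∀ β, β < s.dom → s.toFun β = t.toFun β

/-- The strict tree order on `Λ`. -/
def Lambda.lt (s t : Lambda) : Prop := Lambda.le s t ∧ s ≠ t

/-- `r ≺ s` for `r ∈ Λ ∪ {0}` (`none` plays the role of the extra least element `0`). -/
def precLt : Option Lambda → Lambda → Prop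
  | none, _ => True
  | some r, s => Lambda.lt r s

/-- The interval `(r, t] = {s ∈ Λ : r ≺ s ≼ t}`, with `r ∈ Λ ∪ {0}`. -/
def lamIoc (r : Option Lambda) (t : Lambda) : Set Lambda :=
  {s | precLt r s ∧ Lambda.le s t}

/-- The position of the minimum of `t` on the ordinal interval `[δ, β)`. -/
noncomputable def minPos (t : Ordinal.{0} → ℕ) (δ β : Ordinal.{0}) : Ordinal.{0} :=
  sInf {ξ | δ ≤ ξ ∧ ξ < β ∧ ∀ η, δ ≤ η → η < β → t ξ ≤ t η}

lemma minPos_lt (t : Ordinal.{0} → ℕ) {δ β : Ordinal.{0}} (h : δ < β) : minPos t δ β < β := by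
  have hne : {ξ : Ordinal.{0} | δ ≤ ξ ∧ ξ < β ∧ ∀ η, δ ≤ η → η < β → t ξ ≤ t η}.Nonempty := by
    have h1 : {n : ℕ | ∃ ξ : Ordinal.{0}, δ ≤ ξ ∧ ξ < β ∧ t ξ = n}.Nonempty :=
      ⟨t δ, δ, le_refl _, h, rfl⟩
    obtain ⟨ξ, hξ1, hξ2, hξ3⟩ := Nat.sInf_mem h1
    refine ⟨ξ, hξ1, hξ2, fun η h1' h2' => ?_⟩
    rw [hξ3]
    exact Nat.sInf_le ⟨η, h1', h2', rfl⟩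
  obtain ⟨ξ, hξ⟩ := hne
  calc minPos t δ β ≤ ξ := csInf_le (OrderBot.bddBelow _) hξ
    _ < β := hξ.2.1

/-- The sequence `τ` computed from the starting ordinal `β₀` downwards: `τ` is obtained by
repeatedly passing from `β` to the position of the minimum of `t` on `[δ, β)`, stopping upon
reaching `δ`.  The resulting finite sequence `(β_k, …, β_1)` is recorded as a list in the
order `[β_k, …, β_1]` (so concatenation of the lists corresponds to `⌢`). -/
noncomputable def tauFrom (δ : Ordinal.{0}) (t : Ordinal.{0} → ℕ) : Ordinal.{0} → List Ordinal.{0} :=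
  WellFounded.fix wellFounded_lt
    (fun β IH => if h : δ < β then IH (minPos t δ β) (minPos_lt t h) ++ [minPos t δ β] else [])

/-- The finite sequence `τ(s,t)` of ordinals, for `s ≼ t` in `Λ`. -/
noncomputable def tau (s t : Lambda) : List Ordinal.{0} :=
  tauFrom s.dom t.toFun t.dom

/-- `ℓ(s,t)`, the length of `τ(s,t)`. -/
noncomputable def ell (s t : Lambda) : ℕ := (tau s t).length

/-- The underlying set of the `Λ`-duplicate: `D = Λ × {1, -1}`. -/
abbrev Dup : Type 1 := Lambda × ℤˣ

/-- The basic open sets `W(r,t,i)` of the `Λ`-duplicate. -/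
noncomputable def Wset (r : Option Lambda) (t : Lambda) (i : ℤˣ) : Set Dup :=
  {q | q.1 ∈ lamIoc r t ∧ q.2 = (-1) ^ ell q.1 t * i}

/-- The collection of all basic open sets `W(r,t,i)` with `r ≺ t`. -/
noncomputable def WBasis : Set (Set Dup) :=
  {S | ∃ (r : Option Lambda) (t : Lambda) (i : ℤˣ), precLt r t ∧ S = Wset r t i}

/-- The topology of the `Λ`-duplicate, generated by the basic sets `W(r,t,i)`. -/
noncomputable instance : TopologicalSpace Dup := TopologicalSpace.generateFrom WBasis

/-- `s⁺`, the set of immediate successors of `s` in `Λ`. -/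
def succs (s : Lambda) : Set Lambda :=
  {t | Lambda.lt s t ∧ ∀ u, Lambda.lt s u → Lambda.lt u t → False}


lemma Lambda.le_refl (u : Lambda) : Lambda.le u u := ⟨le_rfl, fun _ _ => rfl⟩

lemma Lambda.ext' {u v : Lambda} (h1 : u.toFun = v.toFun) (h2 : u.dom = v.dom) : u = v := by
  cases u; cases v
  dsimp at h1 h2
  subst h1; subst h2
  rfl

lemma Lambda.le_antisymm' {u v : Lambda} (h : u.le v) (h' : v.le u) : u = v := by
  have hd : u.dom = v.dom := le_antisymm h.1 h'.1
  refine Lambda.ext' (funext fun β => ?_) hd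
  by_cases hb : β < u.dom
  · exact h.2 β hb
  · rw [u.junk β hb, v.junk β (by rw [← hd]; exact hb)]

lemma Lambda.le_total_below {v w u : Lambda} (hv : v.le u) (hw : w.le u) :
    v.le w ∨ w.le v := by
  rcases le_total v.dom w.dom with h | h
  · exact Or.inl ⟨h, fun β hβ =>
      (hv.2 β hβ).trans ((hw.2 β (lt_of_lt_of_le hβ h)).symm)⟩
  · exact Or.inr ⟨h, fun β hβ =>
      (hw.2 β hβ).trans ((hv.2 β (lt_of_lt_of_le hβ h)).symm)⟩

lemma succs_le_eq {s t t' : Lambda} (ht : t ∈ succs s) (ht' : t' ∈ succs s)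
    (h : t.le t') : t = t' := by
  by_contra hne
  exact ht'.2 t ht.1 ⟨h, hne⟩

lemma succs_eq_of_le_le {s t t' u : Lambda} (ht : t ∈ succs s) (ht' : t' ∈ succs s)
    (h : t.le u) (h' : t'.le u) : t = t' := by
  rcases Lambda.le_total_below h h' with hc | hc
  · exact succs_le_eq ht ht' hc
  · exact (succs_le_eq ht' ht hc).symm

lemma tau_self (u : Lambda) : tau u u = [] := by
  unfold tau tauFrom
  rw [WellFounded.fix_eq]
  simp

lemma ell_self (u : Lambda) : ell u u = 0 := by
  rw [ell, tau_self]; rfl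

lemma Wset_isOpen {r : Option Lambda} {t : Lambda} (i : ℤˣ) (h : precLt r t) :
    IsOpen (Wset r t i) :=
  TopologicalSpace.GenerateOpen.basic _ ⟨r, t, i, h, rfl⟩

lemma mem_Wset_self {r : Option Lambda} {t : Lambda} (i : ℤˣ) (h : precLt r t) :
    (t, i) ∈ Wset r t i := by
  refine ⟨⟨h, Lambda.le_refl t⟩, ?_⟩
  simp [ell_self]

lemma key_nbhd (s : Lambda) (x : Dup) :
    ∃ U : Set Dup, IsOpen U ∧ x ∈ U ∧ ∀ z ∈ U, z.1 ∈ succs s → z = x := by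
  obtain ⟨u, j⟩ := x
  by_cases hex : ∃ v ∈ succs s, v.lt u
  · obtain ⟨v, hv, hvu⟩ := hex
    refine ⟨Wset (some v) u j, Wset_isOpen j hvu, mem_Wset_self j hvu, ?_⟩
    rintro ⟨w, k⟩ ⟨⟨hw1, hw2⟩, -⟩ hws
    exact absurd (succs_eq_of_le_le hv hws hvu.1 hw2) hw1.2
  · push_neg at hex
    refine ⟨Wset none u j, Wset_isOpen j trivial, mem_Wset_self j trivial, ?_⟩
    rintro ⟨w, k⟩ ⟨⟨-, hw2⟩, hk⟩ hws
    have hwu : w = u := by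
      by_contra hne
      exact hex w hws ⟨hw2, hne⟩
    subst hwu
    rw [ell_self] at hk
    simp at hk
    rw [hk]

/-- For `f ∈ C₀(D)` and `δ > 0`, given `(s,i) ∈ D` there are only finitely many
`(t,j) ∈ (s,i)⁺ = s⁺ × {1,-1}` with `|f(t,j)| ≥ δ`. -/
theorem finitely_many_large_successors (f : ZeroAtInftyContinuousMap Dup ℝ)
    (δ : ℝ) (hδ : 0 < δ) (s : Lambda) (i : ℤˣ) :
    {q : Dup | q.1 ∈ succs s ∧ δ ≤ |f q|}.Finite := by
  -- the set is contained in a compact set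
  have hco : {q : Dup | |f q| < δ} ∈ Filter.cocompact Dup := by
    have h1 : ∀ᶠ q in Filter.cocompact Dup, dist (f q) 0 < δ :=
      Metric.tendsto_nhds.mp (zero_at_infty f) δ hδ
    simp only [Real.dist_eq, sub_zero] at h1
    exact h1
  obtain ⟨K, hK, hKsub⟩ := Filter.mem_cocompact.mp hco
  choose U hUopen hUmem hUkey using key_nbhd s
  have hcover : K ⊆ ⋃ x : Dup, U x := fun x _ => Set.mem_iUnion.2 ⟨x, hUmem x⟩
  obtain ⟨F, hF⟩ := hK.elim_finite_subcover U hUopen hcover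
  refine Set.Finite.subset F.finite_toSet ?_
  intro q hq
  have hqK : q ∈ K := by
    by_contra hqK
    exact absurd hq.2 (not_le.mpr (hKsub hqK))
  obtain ⟨x, hxF, hxU⟩ := Set.mem_iUnion₂.mp (hF hqK)
  have := hUkey x q hxU hq.1
  rwa [this]
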